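/- Let m ≥ 1, let ⟪·,·⟫ be a nondegenerate symmetric bilinear form on ℝ^m, let B ⊆ ℝ^m be a convex body, and let N be the normal cone of B with respect to ⟪·,·⟫. Then exactly one of the following holds: (a) N ∪ {0} is a linear subspace of ℝ^m; or (b) there exist a unique linear subspace V ⊆ ℝ^m and a unique nonempty convex cone K ⊆ V with 0 ∉ K, open in the subspace topology of V, such that K ⊆ N ⊆ closure(K). In particular, in all cases the closure of N ∪ {0} is a convex cone. -/

import Mathlib

open Set

/-- The normal cone of a convex body `B` with respect to a bilinear form `form`:
all nonzero `w` such that `⟪x − p, w⟫ ≥ 0` for all `x ∈ B`, for some boundary point `p`. -/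
def normalCone {m : ℕ}
    (form : EuclideanSpace ℝ (Fin m) →ₗ[ℝ] EuclideanSpace ℝ (Fin m) →ₗ[ℝ] ℝ)
    (B : Set (EuclideanSpace ℝ (Fin m))) : Set (EuclideanSpace ℝ (Fin m)) :=
  {w | w ≠ 0 ∧ ∃ p ∈ frontier B, ∀ x ∈ B, 0 ≤ form (x - p) w}



variable {m : ℕ}

abbrev Esp (m : ℕ) := EuclideanSpace ℝ (Fin m)

/-- barrier cone (in the w-variable, via the pairing `form`). -/
def barrier (form : Esp m →ₗ[ℝ] Esp m →ₗ[ℝ] ℝ) (B : Set (Esp m)) : Set (Esp m) :=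
  {w | ∃ c, ∀ x ∈ B, c ≤ form x w}

/-- recession "cone". -/
def rc (B : Set (Esp m)) : Set (Esp m) := {v | ∀ x ∈ B, x + v ∈ B}

section basic
variable {form : Esp m →ₗ[ℝ] Esp m →ₗ[ℝ] ℝ} {B : Set (Esp m)}

lemma barrier_zero_mem : (0 : Esp m) ∈ barrier form B :=
  ⟨0, fun x _ => by simp⟩

lemma barrier_convex : Convex ℝ (barrier form B) := by
  rintro w₁ ⟨c₁, h₁⟩ w₂ ⟨c₂, h₂⟩ a b ha hb hab
  refine ⟨a * c₁ + b * c₂, fun x hx => ?_⟩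
  have := h₁ x hx; have := h₂ x hx
  have : a * c₁ ≤ a * form x w₁ := mul_le_mul_of_nonneg_left (h₁ x hx) ha
  have : b * c₂ ≤ b * form x w₂ := mul_le_mul_of_nonneg_left (h₂ x hx) hb
  simp only [map_add, map_smul, smul_eq_mul]
  linarith [mul_le_mul_of_nonneg_left (h₁ x hx) ha, mul_le_mul_of_nonneg_left (h₂ x hx) hb]

lemma barrier_smul {c : ℝ} (hc : 0 ≤ c) {w : Esp m} (hw : w ∈ barrier form B) :
    c • w ∈ barrier form B := by
  obtain ⟨b, hb⟩ := hw
  exact ⟨c * b, fun x hx => by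
    simpa [mul_comm] using mul_le_mul_of_nonneg_left (hb x hx) hc⟩

lemma normal_sub_barrier : normalCone form B ⊆ barrier form B := by
  rintro w ⟨hw0, p, hp, h⟩
  refine ⟨form p w, fun x hx => ?_⟩
  have := h x hx
  have hsub : form (x - p) w = form x w - form p w := by
    simp [map_sub, LinearMap.sub_apply]
  linarith [h x hx, hsub ▸ h x hx]


variable {form : Esp m →ₗ[ℝ] Esp m →ₗ[ℝ] ℝ} {B : Set (Esp m)}

lemma rc_nsmul {v x : Esp m} (hv : v ∈ rc B) (hx : x ∈ B) (n : ℕ) :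
    x + (n : ℝ) • v ∈ B := by
  induction n with
  | zero => simpa using hx
  | succ k ih =>
      have := hv _ ih
      have he : x + ((k:ℝ)+1) • v = (x + (k:ℝ)•v) + v := by
        rw [add_smul, one_smul, add_assoc]
      rw [Nat.cast_succ, he]
      exact this

lemma rc_zero_mem : (0 : Esp m) ∈ rc B := fun x hx => by simpa using hx

lemma rc_add {v₁ v₂ : Esp m} (h₁ : v₁ ∈ rc B) (h₂ : v₂ ∈ rc B) : v₁ + v₂ ∈ rc B :=
  fun x hx => by simpa [add_assoc] using h₂ _ (h₁ x hx)

lemma rc_smul (hconv : Convex ℝ B) {c : ℝ} (hc : 0 ≤ c) {v : Esp m} (hv : v ∈ rc B) :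
    c • v ∈ rc B := by
  intro x hx
  obtain ⟨n, hn⟩ := exists_nat_gt c
  have hn0 : (0:ℝ) < n := lt_of_le_of_lt hc hn
  set a : ℝ := c / n with ha
  have ha0 : 0 ≤ a := div_nonneg hc hn0.le
  have ha1 : a ≤ 1 := by
    rw [ha, div_le_one hn0]; exact hn.le
  have hmem := hconv hx (rc_nsmul hv hx n) (by linarith : 0 ≤ 1 - a) ha0 (by ring)
  have : (1 - a) • x + a • (x + (n:ℝ) • v) = x + c • v := by
    have : a * n = c := div_mul_cancel₀ c hn0.ne'
    rw [smul_add, smul_smul, this, sub_smul, one_smul]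
    abel
  rwa [this] at hmem

lemma rc_pair {v w : Esp m} (hv : v ∈ rc B) (hw : w ∈ barrier form B)
    (hB : B.Nonempty) : 0 ≤ form v w := by
  obtain ⟨c, hc⟩ := hw
  obtain ⟨x, hx⟩ := hB
  by_contra h
  push_neg at h
  obtain ⟨n, hn⟩ := exists_nat_gt ((form x w - c) / (- form v w))
  have hfv : (0:ℝ) < - form v w := by linarith
  have h1 := hc _ (rc_nsmul hv hx n)
  have h2 : form (x + (n:ℝ)•v) w = form x w + n * form v w := by
    simp [map_add, map_smul, LinearMap.add_apply, LinearMap.smul_apply]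
  rw [h2] at h1
  have h4 : form x w - c < n * (- form v w) := by
    rwa [div_lt_iff₀ hfv] at hn
  linarith

/-- every continuous functional is `form · w` for some `w`. -/
lemma form_surj (hsymm : ∀ x y : Esp m, form x y = form y x)
    (hnd : ∀ x : Esp m, (∀ y, form x y = 0) → x = 0) (g : Esp m →L[ℝ] ℝ) :
    ∃ w, ∀ y, form y w = g y := by
  have hinj : Function.Injective (LinearMap.flip form) := by
    rw [← LinearMap.ker_eq_bot, LinearMap.ker_eq_bot']
    intro w hw
    apply hnd
    intro y
    rw [hsymm]
    have := congrArg (fun f => f y) hw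
    simpa using this
  have hsurj : Function.Surjective (LinearMap.flip form) :=
    (LinearMap.injective_iff_surjective_of_finrank_eq_finrank
      (Subspace.dual_finrank_eq (V := Esp m)).symm).mp hinj
  obtain ⟨w, hw⟩ := hsurj g.toLinearMap
  exact ⟨w, fun y => by
    have := congrArg (fun f => f y) hw
    simpa [LinearMap.flip_apply] using this⟩

lemma mem_rc_of_forall (hconv : Convex ℝ B) (hclosed : IsClosed B)
    (hsymm : ∀ x y : Esp m, form x y = form y x)
    (hnd : ∀ x : Esp m, (∀ y, form x y = 0) → x = 0)
    {v : Esp m} (h : ∀ u ∈ barrier form B, 0 ≤ form v u) : v ∈ rc B := by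
  intro x hx
  by_contra hxv
  obtain ⟨f, u, hfB, hfx⟩ := geometric_hahn_banach_closed_point hconv hclosed hxv
  obtain ⟨w, hw⟩ := form_surj hsymm hnd (-f)
  have hwB : w ∈ barrier form B := by
    refine ⟨-u, fun y hy => ?_⟩
    rw [hw]
    simp only [ContinuousLinearMap.neg_apply, neg_le_neg_iff]
    exact (hfB y hy).le
  have h1 : form (x + v) w = form x w + form v w := by
    simp [map_add, LinearMap.add_apply]
  have h2 : form (x + v) w = -f (x + v) := hw _
  have h3 : form x w = -f x := hw _
  have h4 : 0 ≤ form v w := h w hwB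
  have h5 : f x < u := hfB x hx
  linarith

/-- a point on a ray staying in B gives a recession direction. -/
lemma mem_rc_of_ray (hconv : Convex ℝ B) (hclosed : IsClosed B) {x₀ v : Esp m}
    (hx₀ : x₀ ∈ B) (h : ∀ t : ℝ, 0 ≤ t → x₀ + t • v ∈ B) : v ∈ rc B := by
  intro y hy
  have hseq : ∀ n : ℕ, y + v + ((n:ℝ)+1)⁻¹ • (x₀ - y) ∈ B := by
    intro n
    set a : ℝ := ((n:ℝ)+1)⁻¹ with ha
    have hn1 : (0:ℝ) < (n:ℝ)+1 := by positivity
    have ha0 : 0 < a := by positivity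
    have ha1 : a ≤ 1 := by
      rw [ha, inv_le_one_iff₀]; right; linarith
    have hray := h ((n:ℝ)+1) (by positivity)
    have hmem := hconv hy hray (by linarith : (0:ℝ) ≤ 1 - a) ha0.le (by ring)
    have he : (1-a) • y + a • (x₀ + ((n:ℝ)+1) • v) = y + v + a • (x₀ - y) := by
      have hmul : a * ((n:ℝ)+1) = 1 := inv_mul_cancel₀ hn1.ne'
      rw [smul_add, smul_smul, hmul, one_smul, sub_smul, one_smul, smul_sub]
      abel
    rwa [he] at hmem
  have hlim : Filter.Tendsto (fun n : ℕ => y + v + ((n:ℝ)+1)⁻¹ • (x₀ - y))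
      Filter.atTop (nhds (y + v)) := by
    have h1 : Filter.Tendsto (fun n : ℕ => ((n:ℝ)+1)⁻¹) Filter.atTop (nhds 0) :=
      tendsto_one_div_add_atTop_nhds_zero_nat.congr (fun n => by rw [one_div])
    have h2 := h1.smul_const (x₀ - y)
    rw [zero_smul] at h2
    simpa using (tendsto_const_nhds (x := y + v)).add h2
  exact hclosed.mem_of_tendsto hlim (Filter.Eventually.of_forall hseq)


lemma attain (hconv : Convex ℝ B) (hclosed : IsClosed B) (hB : B.Nonempty)
    (hsymm : ∀ x y : Esp m, form x y = form y x)
    (hnd : ∀ x : Esp m, (∀ y, form x y = 0) → x = 0)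
    {w : Esp m} (hw0 : w ≠ 0) (hwC : w ∈ barrier form B)
    (hri : ∀ u ∈ barrier form B, ∃ ε : ℝ, 0 < ε ∧ w + ε • (w - u) ∈ barrier form B) :
    w ∈ normalCone form B := by
  classical
  -- the functional
  set g : Esp m → ℝ := fun y => form y w with hg
  have hglin : ∀ x y : Esp m, g (x + y) = g x + g y := by
    intro x y; simp [hg, map_add, LinearMap.add_apply]
  have hgsmul : ∀ (c : ℝ) (x : Esp m), g (c • x) = c * g x := by
    intro c x; simp [hg, map_smul, LinearMap.smul_apply]
  have hgcont : Continuous g := by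
    have : g = fun y => (LinearMap.flip form w) y := by
      funext y; simp [hg, LinearMap.flip_apply]
    rw [this]
    exact (LinearMap.flip form w).continuous_of_finiteDimensional
  -- directions along which `g` vanishes are two-sided recession directions
  have hvanish : ∀ v, v ∈ rc B → g v = 0 → ∀ u ∈ barrier form B, form v u = 0 := by
    intro v hv hgv u hu
    have h1 : 0 ≤ form v u := rc_pair hv hu hB
    obtain ⟨ε, hε, hmem⟩ := hri u hu
    have h2 : 0 ≤ form v (w + ε • (w - u)) := rc_pair hv hmem hB
    have h3 : form v (w + ε • (w - u)) = (1 + ε) * form v w - ε * form v u := by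
      simp only [map_add, map_smul, map_sub, smul_eq_mul]
      ring
    have h4 : form v w = 0 := hgv
    nlinarith
  have hneg : ∀ v, v ∈ rc B → g v = 0 → (-v ∈ rc B ∧ g (-v) = 0) := by
    intro v hv hgv
    constructor
    · apply mem_rc_of_forall hconv hclosed hsymm hnd
      intro u hu
      have := hvanish v hv hgv u hu
      have he : form (-v) u = - form v u := by
        simp [map_neg, LinearMap.neg_apply]
      rw [he, this, neg_zero]
    · have : g (-v) + g v = 0 := by rw [← hglin]; simp [hg]
      linarith [hgv, this]
  -- the lineality subspace L
  set Lset : Set (Esp m) := {v | v ∈ rc B ∧ g v = 0} with hLset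
  have hLadd : ∀ v₁ ∈ Lset, ∀ v₂ ∈ Lset, v₁ + v₂ ∈ Lset := by
    rintro v₁ ⟨h₁r, h₁g⟩ v₂ ⟨h₂r, h₂g⟩
    exact ⟨rc_add h₁r h₂r, by rw [hglin, h₁g, h₂g, add_zero]⟩
  have hLzero : (0 : Esp m) ∈ Lset := ⟨rc_zero_mem, by simp [hg]⟩
  have hLsmul : ∀ (c : ℝ), ∀ v ∈ Lset, c • v ∈ Lset := by
    rintro c v ⟨hr, hgv⟩
    rcases le_or_gt 0 c with hc | hc
    · exact ⟨rc_smul hconv hc hr, by rw [hgsmul, hgv, mul_zero]⟩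
    · obtain ⟨hnr, hng⟩ := hneg v hr hgv
      have : c • v = (-c) • (-v) := by rw [smul_neg, neg_smul, neg_neg]
      rw [this]
      exact ⟨rc_smul hconv (by linarith) hnr, by rw [hgsmul, hng, mul_zero]⟩
  set L : Submodule ℝ (Esp m) :=
    { carrier := Lset
      add_mem' := fun ha hb => hLadd _ ha _ hb
      zero_mem' := hLzero
      smul_mem' := fun c v hv => hLsmul c v hv } with hL
  have hmemL : ∀ v, v ∈ L ↔ (v ∈ rc B ∧ g v = 0) := fun v => Iff.rfl
  -- decompose a point of B into L ⊕ Lᗮ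
  have hdecomp : ∀ x ∈ B, ∃ b, b ∈ B ∧ b ∈ Lᗮ ∧ g b = g x := by
    intro x hx
    obtain ⟨a, ha, b, hb, hab⟩ := L.exists_add_mem_mem_orthogonal x
    refine ⟨b, ?_, hb, ?_⟩
    · have hna : -a ∈ L := neg_mem ha
      have := ((hmemL (-a)).mp hna).1 x hx
      have he : x + -a = b := by rw [hab]; abel
      rwa [he] at this
    · have := ((hmemL a).mp ha).2
      rw [hab, hglin, this, zero_add]
  obtain ⟨x₁, hx₁⟩ := id hB
  obtain ⟨x₀, hx₀B, hx₀o, _⟩ := hdecomp x₁ hx₁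
  -- the sublevel set
  set S : Set (Esp m) := {x | x ∈ B ∧ x ∈ Lᗮ ∧ g x ≤ g x₀} with hS
  have hSne : S.Nonempty := ⟨x₀, hx₀B, hx₀o, le_refl _⟩
  have hSclosed : IsClosed S := by
    have h1 : IsClosed (Lᗮ : Set (Esp m)) := Submodule.closed_of_finiteDimensional _
    have h2 : IsClosed {x : Esp m | g x ≤ g x₀} := isClosed_le hgcont continuous_const
    have he : S = (B ∩ (Lᗮ : Set (Esp m))) ∩ {x : Esp m | g x ≤ g x₀} := by
      ext x
      simp only [hS, Set.mem_setOf_eq, Set.mem_inter_iff, SetLike.mem_coe]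
      tauto
    rw [he]
    exact (hclosed.inter h1).inter h2
  -- S is bounded
  have hSbdd : ∃ r : ℝ, S ⊆ Metric.closedBall x₀ r := by
    by_contra hub
    push_neg at hub
    have hex : ∀ n : ℕ, ∃ x, x ∈ S ∧ (n : ℝ) < ‖x - x₀‖ := by
      intro n
      have h1 := hub n
      rw [Set.not_subset] at h1
      obtain ⟨x, hxS, hxn⟩ := h1
      exact ⟨x, hxS, by rwa [Metric.mem_closedBall, not_le, dist_eq_norm] at hxn⟩
    choose xs hxsS hxsn using hex
    set vs : ℕ → Esp m := fun n => ‖xs n - x₀‖⁻¹ • (xs n - x₀) with hvs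
    have hnorm_pos : ∀ n : ℕ, 0 < ‖xs (n+1) - x₀‖ := by
      intro n
      calc (0:ℝ) ≤ (n+1 : ℕ) := by positivity
      _ < ‖xs (n+1) - x₀‖ := hxsn (n+1)
    have hnpos : ∀ n : ℕ, (1:ℕ) ≤ n → 0 < ‖xs n - x₀‖ := by
      intro n hn
      have : (0:ℝ) < (n:ℝ) := by exact_mod_cast hn
      exact lt_trans this (hxsn n)
    have hvs_sphere : ∀ n : ℕ, vs (n+1) ∈ Metric.sphere (0 : Esp m) 1 := by
      intro n
      have h0 := hnorm_pos n
      simp only [hvs, Metric.mem_sphere, dist_zero_right, norm_smul, norm_inv, norm_norm]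
      rw [inv_mul_cancel₀ h0.ne']
    obtain ⟨v, hvmem, φ, hφ, hφlim⟩ :=
      (isCompact_sphere (0 : Esp m) 1).tendsto_subseq (fun n => hvs_sphere n)
    have hφge : ∀ n : ℕ, (n : ℝ) + 1 ≤ ‖xs (φ n + 1) - x₀‖ := by
      intro n
      have h1 : n ≤ φ n := hφ.le_apply
      have h2 : ((φ n + 1 : ℕ) : ℝ) < ‖xs (φ n + 1) - x₀‖ := hxsn _
      have h3 : (n:ℝ) + 1 ≤ ((φ n + 1 : ℕ) : ℝ) := by
        push_cast
        have : (n:ℝ) ≤ (φ n : ℝ) := by exact_mod_cast h1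
        linarith
      linarith
    -- the limit direction stays in B along rays
    have hray : ∀ t : ℝ, 0 ≤ t → x₀ + t • v ∈ B := by
      intro t ht
      have hmem : ∀ n : ℕ, t ≤ ‖xs (n+1) - x₀‖ → x₀ + t • vs (n+1) ∈ B := by
        intro n hn
        set r : ℝ := ‖xs (n+1) - x₀‖ with hr
        have hrpos : 0 < r := hnorm_pos n
        set a : ℝ := t / r with ha
        have ha0 : 0 ≤ a := div_nonneg ht hrpos.le
        have ha1 : a ≤ 1 := by rw [ha, div_le_one hrpos]; exact hn
        have hmem' := hconv hx₀B (hxsS (n+1)).1 (by linarith : 0 ≤ 1 - a) ha0 (by ring)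
        have he : (1-a) • x₀ + a • xs (n+1) = x₀ + t • vs (n+1) := by
          simp only [hvs, smul_smul]
          have : t * r⁻¹ = a := by rw [ha]; ring
          rw [this, sub_smul, one_smul, smul_sub]
          abel
        rwa [he] at hmem'
      have hlim2 : Filter.Tendsto (fun n => x₀ + t • vs (φ n + 1)) Filter.atTop
          (nhds (x₀ + t • v)) := by
        exact (tendsto_const_nhds.add ((hφlim.const_smul t)))
      apply hclosed.mem_of_tendsto hlim2
      rw [Filter.eventually_atTop]
      obtain ⟨N, hN⟩ := exists_nat_ge t
      refine ⟨N, fun n hn => ?_⟩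
      apply hmem
      calc t ≤ (N:ℝ) := hN
      _ ≤ (n:ℝ) := by exact_mod_cast hn
      _ ≤ (n:ℝ) + 1 := by linarith
      _ ≤ ‖xs (φ n + 1) - x₀‖ := hφge n
    have hvrc : v ∈ rc B := mem_rc_of_ray hconv hclosed hx₀B hray
    -- v is in Lᗮ
    have hvo : v ∈ Lᗮ := by
      have hclosedo : IsClosed (Lᗮ : Set (Esp m)) := Submodule.closed_of_finiteDimensional _
      apply hclosedo.mem_of_tendsto hφlim
      apply Filter.Eventually.of_forall
      intro n
      exact Submodule.smul_mem _ _ (Submodule.sub_mem _ (hxsS _).2.1 hx₀o)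
    -- g v ≤ 0
    have hgv_le : g v ≤ 0 := by
      have hle : ∀ n : ℕ, g (vs (φ n + 1)) ≤ 0 := by
        intro n
        have h1 := (hxsS (φ n + 1)).2.2
        rw [hvs]
        simp only
        rw [hgsmul]
        have h2 : g (xs (φ n + 1) - x₀) ≤ 0 := by
          have : g (xs (φ n + 1) - x₀) = g (xs (φ n + 1)) - g x₀ := by
            have := hglin (xs (φ n + 1) - x₀) x₀
            simp at this
            linarith
          linarith
        have h3 : (0:ℝ) ≤ ‖xs (φ n + 1) - x₀‖⁻¹ := inv_nonneg.mpr (norm_nonneg _)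
        exact mul_nonpos_of_nonneg_of_nonpos h3 h2
      have := le_of_tendsto (hgcont.continuousAt.tendsto.comp hφlim)
        (Filter.Eventually.of_forall hle)
      exact this
    have hgv_ge : 0 ≤ g v := rc_pair hvrc hwC hB
    have hgv0 : g v = 0 := le_antisymm hgv_le hgv_ge
    have hvL : v ∈ L := (hmemL v).mpr ⟨hvrc, hgv0⟩
    have hv0 : v = 0 := by
      have h1 : inner ℝ v v = (0:ℝ) := (Submodule.mem_orthogonal L v).mp hvo v hvL
      exact inner_self_eq_zero.mp h1
    have : ‖v‖ = 1 := by
      simpa [Metric.mem_sphere, dist_zero_right] using hvmem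
    rw [hv0] at this
    simp at this
  -- S is compact; take the minimiser
  obtain ⟨r, hr⟩ := hSbdd
  have hScompact : IsCompact S :=
    (Metric.isCompact_iff_isClosed_bounded).mpr
      ⟨hSclosed, (Metric.isBounded_closedBall (x := x₀) (r := r)).subset hr⟩
  obtain ⟨p, hpS, hpmin⟩ := hScompact.exists_isMinOn hSne hgcont.continuousOn
  -- p is a global minimiser on B
  have hpB : p ∈ B := hpS.1
  have hmin : ∀ x ∈ B, g p ≤ g x := by
    intro x hx
    obtain ⟨b, hbB, hbo, hbg⟩ := hdecomp x hx
    rcases le_or_gt (g b) (g x₀) with h | h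
    · have : b ∈ S := ⟨hbB, hbo, h⟩
      have := hpmin this
      rw [← hbg]; exact this
    · have h0 : g p ≤ g x₀ := hpS.2.2
      rw [← hbg]; linarith
  -- p is not interior
  have hpfr : p ∈ frontier B := by
    refine ⟨subset_closure hpB, ?_⟩
    intro hpint
    -- find u with g u < 0
    have hgne : ∃ u, g u ≠ 0 := by
      by_contra hc
      push_neg at hc
      apply hw0
      apply hnd
      intro y
      rw [hsymm]
      exact hc y
    obtain ⟨u₀, hu₀⟩ := hgne
    obtain ⟨u, hu, hu0⟩ : ∃ u, g u < 0 ∧ u ≠ 0 := by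
      rcases lt_or_gt_of_ne hu₀ with h | h
      · refine ⟨u₀, h, fun h0 => ?_⟩
        rw [h0] at h; simp [hg] at h
      · refine ⟨-u₀, ?_, fun h0 => ?_⟩
        · have : g (-u₀) + g u₀ = 0 := by rw [← hglin]; simp [hg]
          linarith
        · rw [neg_eq_zero] at h0; rw [h0] at h; simp [hg] at h
    obtain ⟨ε, hε, hball⟩ := Metric.isOpen_iff.mp isOpen_interior p hpint
    set δ : ℝ := ε / (2 * ‖u‖) with hδ
    have hupos : 0 < ‖u‖ := norm_pos_iff.mpr hu0
    have hδpos : 0 < δ := by positivity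
    have hxmem : p + δ • u ∈ B := by
      apply interior_subset
      apply hball
      rw [Metric.mem_ball, dist_eq_norm]
      have : p + δ • u - p = δ • u := by abel
      rw [this, norm_smul, Real.norm_eq_abs, abs_of_pos hδpos, hδ]
      rw [div_mul_eq_mul_div, mul_comm]
      rw [div_lt_iff₀ (by positivity : (0:ℝ) < 2 * ‖u‖)]
      nlinarith
    have := hmin _ hxmem
    have he : g (p + δ • u) = g p + δ * g u := by rw [hglin, hgsmul]
    nlinarith
  exact ⟨hw0, p, hpfr, fun x hx => by
    have : form (x - p) w = g x - g p := by
      simp [hg, map_sub, LinearMap.sub_apply]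
    rw [this]
    linarith [hmin x hx]⟩

end basic



section helpers
variable {F : Type*} [NormedAddCommGroup F] [NormedSpace ℝ F]

lemma conv_subset_closure_interior {s : Set F} (hs : Convex ℝ s) {k : F}
    (hk : k ∈ interior s) : s ⊆ closure (interior s) := by
  intro u hu
  have hmem : ∀ n : ℕ, ((n:ℝ)+1)⁻¹ • k + (1 - ((n:ℝ)+1)⁻¹) • u ∈ interior s := by
    intro n
    have hn1 : (0:ℝ) < (n:ℝ)+1 := by positivity
    have ha0 : 0 < ((n:ℝ)+1)⁻¹ := by positivity
    have ha1 : ((n:ℝ)+1)⁻¹ ≤ 1 := by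
      rw [inv_le_one_iff₀]; right; linarith
    exact hs.combo_interior_closure_mem_interior hk (subset_closure hu) ha0
      (by linarith) (by ring)
  have h1 : Filter.Tendsto (fun n : ℕ => ((n:ℝ)+1)⁻¹) Filter.atTop (nhds 0) :=
    tendsto_one_div_add_atTop_nhds_zero_nat.congr (fun n => by rw [one_div])
  have hlim : Filter.Tendsto
      (fun n : ℕ => ((n:ℝ)+1)⁻¹ • k + (1 - ((n:ℝ)+1)⁻¹) • u) Filter.atTop
      (nhds u) := by
    have h2 := h1.smul_const k
    have h3 := ((tendsto_const_nhds (x := (1:ℝ))).sub h1).smul_const u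
    rw [zero_smul] at h2
    rw [sub_zero, one_smul] at h3
    simpa using h2.add h3
  exact mem_closure_of_tendsto hlim (Filter.Eventually.of_forall hmem)

lemma stretch_subset {s t : Set F} (hs : Convex ℝ s) (hso : IsOpen s) (hto : IsOpen t)
    (hts : t ⊆ closure s) : t ⊆ s := by
  intro x hx
  obtain ⟨k, hk⟩ : s.Nonempty := by
    rcases s.eq_empty_or_nonempty with h | h
    · exfalso
      have := hts hx
      rw [h, closure_empty] at this
      exact this
    · exact h
  have hcont : Continuous (fun θ : ℝ => x + θ • (x - k)) := by
    exact continuous_const.add (continuous_id.smul continuous_const)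
  have hx' : (fun θ : ℝ => x + θ • (x - k)) 0 ∈ t := by simpa using hx
  have hnhds : (fun θ : ℝ => x + θ • (x - k)) ⁻¹' t ∈ nhds (0:ℝ) :=
    hcont.continuousAt.preimage_mem_nhds (hto.mem_nhds hx')
  obtain ⟨δ, hδ0, hδ⟩ := Metric.mem_nhds_iff.mp hnhds
  set θ : ℝ := δ/2 with hθ
  have hθ0 : 0 < θ := by positivity
  have hmemt : x + θ • (x - k) ∈ t := by
    apply hδ
    rw [Metric.mem_ball, dist_zero_right, Real.norm_eq_abs, abs_of_pos hθ0]
    linarith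
  set a : ℝ := θ/(1+θ) with ha
  set b : ℝ := 1/(1+θ) with hb
  have h1θ : (0:ℝ) < 1 + θ := by linarith
  have ha0 : 0 < a := by positivity
  have hb0 : (0:ℝ) ≤ b := by positivity
  have hab : a + b = 1 := by rw [ha, hb]; field_simp; ring
  have hcombo := hs.combo_interior_closure_mem_interior
    (by rwa [hso.interior_eq] : k ∈ interior s) (hts hmemt) ha0 hb0 hab
  have he : a • k + b • (x + θ • (x - k)) = x := by
    have e1 : b * θ = a := by rw [ha, hb]; field_simp
    have e2 : b + b * θ = 1 := by
      rw [hb]; field_simp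
    have expand : a • k + b • (x + θ • (x - k))
        = (a - b * θ) • k + (b + b * θ) • x := by
      rw [smul_add, smul_smul, smul_sub, sub_smul, add_smul]
      abel
    rw [expand, e2, one_smul, e1, sub_self, zero_smul, zero_add]
  rw [he] at hcombo
  rwa [hso.interior_eq] at hcombo

end helpers

section helpers2
variable {F : Type*} [NormedAddCommGroup F] [NormedSpace ℝ F] [FiniteDimensional ℝ F]

lemma subtype_closure (W : Submodule ℝ F) (s : Set W) :
    closure s = (Subtype.val ⁻¹' closure (Subtype.val '' s) : Set W) :=
  Topology.IsEmbedding.subtypeVal.closure_eq_preimage_closure_image s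

lemma closure_preimage_val {W : Submodule ℝ F} {K₂ : Set F} (hK₂W : K₂ ⊆ W) :
    closure (Subtype.val ⁻¹' K₂ : Set W) = Subtype.val ⁻¹' (closure K₂) := by
  rw [subtype_closure W]
  have himg : ((Subtype.val : W → F) '' ((Subtype.val : W → F) ⁻¹' K₂) : Set F) = K₂ := by
    ext y
    constructor
    · rintro ⟨v, hv, rfl⟩; exact hv
    · intro hy; exact ⟨⟨y, hK₂W hy⟩, hy, rfl⟩
  rw [himg]

lemma zero_helper {W : Submodule ℝ F} {K₂ : Set F} (hK₂W : K₂ ⊆ W)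
    (hcv : Convex ℝ K₂) (hop : IsOpen {v : W | (v : F) ∈ K₂}) {k : F}
    (hk : k ∈ K₂) (hmk : -k ∈ closure K₂) : (0 : F) ∈ K₂ := by
  set K' : Set W := Subtype.val ⁻¹' K₂ with hK'
  have hK'conv : Convex ℝ K' := hcv.linear_preimage W.subtype
  have hK'open : IsOpen K' := hop
  have hmkW : -k ∈ W := by
    have h1 : closure K₂ ⊆ W := by
      apply closure_minimal hK₂W
      exact Submodule.closed_of_finiteDimensional W
    exact h1 hmk
  set k' : W := ⟨k, hK₂W hk⟩ with hk'd
  set mk' : W := ⟨-k, hmkW⟩ with hmk'd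
  have hk' : k' ∈ interior K' := by rw [hK'open.interior_eq]; exact hk
  have hmk' : mk' ∈ closure K' := by
    rw [closure_preimage_val hK₂W]
    exact hmk
  have hcombo := hK'conv.combo_interior_closure_mem_interior hk' hmk'
    (by norm_num : (0:ℝ) < 1/2) (by norm_num : (0:ℝ) ≤ 1/2) (by norm_num)
  have he : (1/2 : ℝ) • k' + (1/2 : ℝ) • mk' = 0 := by
    apply Subtype.ext
    push_cast [hk'd, hmk'd]
    simp [smul_neg]
  rw [he] at hcombo
  have : (0 : W) ∈ K' := interior_subset hcombo
  simpa [hK'] using this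

lemma span_le_of_open {W : Submodule ℝ F} {K₂ : Set F} (hK₂W : K₂ ⊆ W)
    (hop : IsOpen {v : W | (v : F) ∈ K₂}) {k : F} (hk : k ∈ K₂) :
    W ≤ Submodule.span ℝ K₂ := by
  intro u hu
  set k' : W := ⟨k, hK₂W hk⟩ with hk'd
  have hk'mem : k' ∈ {v : W | (v : F) ∈ K₂} := hk
  obtain ⟨ε, hε0, hball⟩ := Metric.isOpen_iff.mp hop k' hk'mem
  by_cases hu0 : u = 0
  · rw [hu0]; exact Submodule.zero_mem _
  · set u' : W := ⟨u, hu⟩ with hu'd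
    have hu'0 : u' ≠ 0 := fun h => hu0 (by simpa [hu'd] using congrArg Subtype.val h)
    have hun : 0 < ‖u'‖ := norm_pos_iff.mpr hu'0
    set c : ℝ := ε / (2 * ‖u'‖) with hc
    have hc0 : 0 < c := by positivity
    have hmem : k' + c • u' ∈ {v : W | (v : F) ∈ K₂} := by
      apply hball
      rw [Metric.mem_ball, dist_eq_norm]
      have : k' + c • u' - k' = c • u' := by abel
      rw [this, norm_smul, Real.norm_eq_abs, abs_of_pos hc0]
      have hne : ‖u‖ ≠ 0 := norm_ne_zero_iff.mpr hu0
      have he2 : c * ‖u'‖ = ε / 2 := by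
        have : ‖u'‖ = ‖u‖ := rfl
        rw [hc, this]; field_simp
      rw [he2]; linarith
    have h1 : k + c • u ∈ K₂ := by
      have h2 : ((k' + c • u' : W) : F) ∈ K₂ := hmem
      simpa [hk'd, hu'd] using h2
    have h2 : c • u ∈ Submodule.span ℝ K₂ := by
      have := (Submodule.span ℝ K₂).sub_mem (Submodule.subset_span h1) (Submodule.subset_span hk)
      simpa using this
    have := (Submodule.span ℝ K₂).smul_mem c⁻¹ h2
    rwa [smul_smul, inv_mul_cancel₀ hc0.ne', one_smul] at this

end helpers2


set_option maxHeartbeats 2000000 in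
theorem stmt_8 {m : ℕ} (hm : 1 ≤ m)
    (form : EuclideanSpace ℝ (Fin m) →ₗ[ℝ] EuclideanSpace ℝ (Fin m) →ₗ[ℝ] ℝ)
    (hsymm : ∀ x y, form x y = form y x)
    (hnd : ∀ x, (∀ y, form x y = 0) → x = 0)
    (B : Set (EuclideanSpace ℝ (Fin m)))
    (hconv : Convex ℝ B) (hclosed : IsClosed B) (hint : (interior B).Nonempty) :
    (Xor'
      -- (a) N ∪ {0} is a linear subspace
      (∃ V : Submodule ℝ (EuclideanSpace ℝ (Fin m)),
        normalCone form B ∪ {0} = (V : Set (EuclideanSpace ℝ (Fin m))))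
      -- (b) a unique subspace V and unique open convex cone K in V with K ⊆ N ⊆ closure K
      (∃! VK : Submodule ℝ (EuclideanSpace ℝ (Fin m)) × Set (EuclideanSpace ℝ (Fin m)),
        VK.2.Nonempty ∧ (0 : EuclideanSpace ℝ (Fin m)) ∉ VK.2 ∧
        Convex ℝ VK.2 ∧ (∀ c : ℝ, 0 < c → ∀ x ∈ VK.2, c • x ∈ VK.2) ∧
        VK.2 ⊆ (VK.1 : Set (EuclideanSpace ℝ (Fin m))) ∧
        IsOpen {v : VK.1 | (v : EuclideanSpace ℝ (Fin m)) ∈ VK.2} ∧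
        VK.2 ⊆ normalCone form B ∧ normalCone form B ⊆ closure VK.2)) ∧
    -- in all cases the closure of N ∪ {0} is a convex cone
    Convex ℝ (closure (normalCone form B ∪ {0})) ∧
    (∀ c : ℝ, 0 ≤ c → ∀ x ∈ closure (normalCone form B ∪ {0}),
      c • x ∈ closure (normalCone form B ∪ {0})) := by
  classical
  obtain ⟨xint, hxint⟩ := hint
  have hB : B.Nonempty := ⟨xint, interior_subset hxint⟩
  set N : Set (Esp m) := normalCone form B with hN
  set C : Set (Esp m) := barrier form B with hC
  have hC0 : (0 : Esp m) ∈ C := barrier_zero_mem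
  have hCconv : Convex ℝ C := barrier_convex
  set V : Submodule ℝ (Esp m) := Submodule.span ℝ C with hVd
  have hCV : C ⊆ (V : Set (Esp m)) := Submodule.subset_span
  set CV : Set V := (Subtype.val : V → Esp m) ⁻¹' C with hCVd
  set K : Set (Esp m) := (Subtype.val : V → Esp m) '' (interior CV) with hKd
  have hCVconv : Convex ℝ CV := hCconv.linear_preimage V.subtype
  -- CV spans ⊤
  have hspanCV : Submodule.span ℝ CV = ⊤ := by
    apply Submodule.map_injective_of_injective (Submodule.injective_subtype V)
    rw [Submodule.map_span, Submodule.map_subtype_top]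
    have himg : (V.subtype '' CV) = C := by
      ext y
      constructor
      · rintro ⟨v, hv, rfl⟩; exact hv
      · intro hy; exact ⟨⟨y, hCV hy⟩, hy, rfl⟩
    rw [himg]
  have h0CV : (0 : V) ∈ CV := by
    show ((0 : V) : Esp m) ∈ C
    simpa using hC0
  -- the interior of CV is nonempty
  have hKVne : (interior CV).Nonempty := by
    rw [Convex.interior_nonempty_iff_affineSpan_eq_top hCVconv]
    have hvs : vectorSpan ℝ CV = ⊤ := by
      rw [vectorSpan_eq_span_vsub_set_right ℝ h0CV]
      simpa using hspanCV
    rw [eq_top_iff]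
    intro x _
    have hx : x ∈ (affineSpan ℝ CV).direction := by
      rw [direction_affineSpan, hvs]
      trivial
    have := AffineSubspace.vadd_mem_of_mem_direction hx (mem_affineSpan ℝ h0CV)
    simpa using this
  have hKC : K ⊆ C := by
    rintro _ ⟨w', hw', rfl⟩
    have h1 : w' ∈ CV := (interior_subset : interior CV ⊆ CV) hw'
    exact h1
  have hKsubV : K ⊆ (V : Set (Esp m)) := by
    rintro _ ⟨w', _, rfl⟩
    exact w'.2
  have hKopen : IsOpen {v : V | (v : Esp m) ∈ K} := by
    have he : {v : V | (v : Esp m) ∈ K} = interior CV := by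
      ext v
      exact Subtype.val_injective.mem_set_image
    rw [he]
    exact isOpen_interior
  have hKconv : Convex ℝ K := (hCVconv.interior).linear_image V.subtype
  have hKne : K.Nonempty := hKVne.image _
  -- scaling invariance of K
  have hKscale : ∀ c : ℝ, 0 < c → ∀ x ∈ K, c • x ∈ K := by
    intro c hc x hx
    obtain ⟨x', hx', rfl⟩ := hx
    have hUopen : IsOpen ((fun y : V => c⁻¹ • y) ⁻¹' (interior CV)) :=
      isOpen_interior.preimage (continuous_const_smul c⁻¹)
    have hUsub : ((fun y : V => c⁻¹ • y) ⁻¹' (interior CV)) ⊆ CV := by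
      intro y hy
      have h0 : c⁻¹ • y ∈ CV := (interior_subset : interior CV ⊆ CV) hy
      have h1 : ((c⁻¹ • y : V) : Esp m) ∈ C := h0
      have h2 : (c : ℝ) • ((c⁻¹ • y : V) : Esp m) ∈ C := barrier_smul hc.le h1
      have h3 : (c : ℝ) • ((c⁻¹ • y : V) : Esp m) = (y : Esp m) := by
        push_cast
        rw [smul_smul, mul_inv_cancel₀ hc.ne', one_smul]
      rwa [h3] at h2
    have hmem : c • x' ∈ (fun y : V => c⁻¹ • y) ⁻¹' (interior CV) := by
      show c⁻¹ • (c • x') ∈ interior CV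
      rw [smul_smul, inv_mul_cancel₀ hc.ne', one_smul]
      exact hx'
    have : c • x' ∈ interior CV := interior_maximal hUsub hUopen hmem
    exact ⟨c • x', this, by push_cast; ring_nf⟩
  -- the relative interior pushing property
  have hriK : ∀ w ∈ K, ∀ u ∈ C, ∃ ε : ℝ, 0 < ε ∧ w + ε • (w - u) ∈ C := by
    rintro _ ⟨w', hw', rfl⟩ u hu
    set u' : V := ⟨u, hCV hu⟩ with hu'd
    have hcont : Continuous (fun t : ℝ => w' + t • (w' - u')) :=
      continuous_const.add (continuous_id.smul continuous_const)
    have h0 : (fun t : ℝ => w' + t • (w' - u')) 0 ∈ interior CV := by simpa using hw'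
    have hnhds : (fun t : ℝ => w' + t • (w' - u')) ⁻¹' (interior CV) ∈ nhds (0:ℝ) :=
      hcont.continuousAt.preimage_mem_nhds (isOpen_interior.mem_nhds h0)
    obtain ⟨δ, hδ0, hδ⟩ := Metric.mem_nhds_iff.mp hnhds
    refine ⟨δ/2, by positivity, ?_⟩
    have hmem : w' + (δ/2) • (w' - u') ∈ interior CV := by
      apply hδ
      rw [Metric.mem_ball, dist_zero_right, Real.norm_eq_abs, abs_of_pos (by positivity : (0:ℝ) < δ/2)]
      linarith
    have h1 : w' + (δ/2) • (w' - u') ∈ CV := (interior_subset : interior CV ⊆ CV) hmem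
    have h2 : ((w' + (δ/2) • (w' - u') : V) : Esp m) ∈ C := h1
    have hcoe : ((w' + (δ/2) • (w' - u') : V) : Esp m)
        = (w' : Esp m) + (δ/2) • ((w' : Esp m) - u) := by
      push_cast [hu'd]
      ring_nf
    rwa [hcoe] at h2
  have hKN : ∀ w ∈ K, w ≠ 0 → w ∈ N := by
    intro w hw hw0
    exact attain hconv hclosed hB hsymm hnd hw0 (hKC hw) (fun u hu => hriK w hw u hu)
  have hNC : N ⊆ C := normal_sub_barrier
  have hCclK : C ⊆ closure K := by
    intro u hu
    obtain ⟨k', hk'⟩ := hKVne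
    have hsub := conv_subset_closure_interior hCVconv hk'
    have hu' : (⟨u, hCV hu⟩ : V) ∈ CV := hu
    have h1 : (⟨u, hCV hu⟩ : V) ∈ closure (interior CV) := hsub hu'
    have h2 := image_closure_subset_closure_image
      (continuous_subtype_val (p := fun x => x ∈ V)) (s := interior CV)
    exact h2 ⟨_, h1, rfl⟩
  have hNclK : N ⊆ closure K := fun w hw => hCclK (hNC hw)
  have hKNor0 : K ⊆ N ∪ {0} := by
    intro w hw
    by_cases h : w = 0
    · right; simp [h]
    · left; exact hKN w hw h
  have h0N : ∀ w ∈ N, w ≠ (0 : Esp m) := fun w hw => hw.1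
  -- the closure equality
  have hclosureEq : closure (N ∪ {0}) = closure C := by
    apply Subset.antisymm
    · apply closure_mono
      rintro w (hw | hw)
      · exact hNC hw
      · rw [mem_singleton_iff] at hw
        rw [hw]; exact hC0
    · refine closure_minimal (fun u hu => ?_) isClosed_closure
      exact closure_mono hKNor0 (hCclK hu)
  have hfinal1 : Convex ℝ (closure (N ∪ {0})) := by
    rw [hclosureEq]; exact hCconv.closure
  have hfinal2 : ∀ c : ℝ, 0 ≤ c → ∀ x ∈ closure (N ∪ {0}), c • x ∈ closure (N ∪ {0}) := by
    intro c hc x hx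
    rw [hclosureEq] at hx ⊢
    rcases eq_or_lt_of_le hc with h | h
    · rw [← h, zero_smul]
      exact subset_closure hC0
    · have h1 := image_closure_subset_closure_image (continuous_const_smul c) (s := C)
      have h2 : c • x ∈ closure ((c • ·) '' C) := h1 ⟨x, hx, rfl⟩
      refine closure_mono ?_ h2
      rintro _ ⟨y, hy, rfl⟩
      exact barrier_smul h.le hy
  refine ⟨?_, hfinal1, hfinal2⟩
  by_cases hz : (0 : Esp m) ∈ K
  · -- case (a)
    have hCeqV : C = (V : Set (Esp m)) := by
      apply Subset.antisymm hCV
      intro v hvV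
      by_cases hv0 : v = 0
      · rw [hv0]; exact hC0
      · obtain ⟨z', hz', hz0⟩ := hz
        have h0KV : (0 : V) ∈ interior CV := by
          have : z' = (0 : V) := Subtype.val_injective hz0
          rwa [this] at hz'
        obtain ⟨δ, hδ0, hball⟩ := Metric.isOpen_iff.mp isOpen_interior 0 h0KV
        set v' : V := ⟨v, hvV⟩ with hv'd
        have hvn : 0 < ‖v'‖ := by
          rw [norm_pos_iff]
          exact fun h => hv0 (by simpa [hv'd] using congrArg Subtype.val h)
        set c : ℝ := δ / (2 * ‖v'‖) with hcd
        have hc0 : 0 < c := by positivity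
        have hmem : c • v' ∈ CV := by
          apply interior_subset
          apply hball
          rw [Metric.mem_ball, dist_zero_right, norm_smul, Real.norm_eq_abs, abs_of_pos hc0]
          have hne : ‖v‖ ≠ 0 := fun h => hv0 (norm_eq_zero.mp h)
          have he2 : c * ‖v'‖ = δ / 2 := by
            have hnn : ‖v'‖ = ‖v‖ := rfl
            rw [hcd, hnn]; field_simp
          rw [he2]; linarith
        have h1 : c • v ∈ C := by
          have h0 : ((c • v' : V) : Esp m) ∈ C := hmem
          simpa [hv'd] using h0
        have h2 := barrier_smul (inv_nonneg.mpr hc0.le) h1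
        rwa [smul_smul, inv_mul_cancel₀ hc0.ne', one_smul] at h2
    have hNV : N ∪ {0} = (V : Set (Esp m)) := by
      apply Subset.antisymm
      · rintro w (hw | hw)
        · rw [← hCeqV]; exact hNC hw
        · rw [mem_singleton_iff] at hw
          rw [hw]
          exact Submodule.zero_mem V
      · intro v hvV
        by_cases hv0 : v = 0
        · right; simp [hv0]
        · left
          have hvC : v ∈ C := by rw [hCeqV]; exact hvV
          apply attain hconv hclosed hB hsymm hnd hv0 hvC
          intro u hu
          refine ⟨1, one_pos, ?_⟩
          have huV : u ∈ V := hCV hu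
          show v + (1:ℝ) • (v - u) ∈ C
          rw [hCeqV]
          have : v + (1:ℝ) • (v - u) ∈ V :=
            V.add_mem hvV (by rw [one_smul]; exact V.sub_mem hvV huV)
          exact this
    left
    refine ⟨⟨V, hNV⟩, ?_⟩
    rintro ⟨⟨V₂, K₂⟩, ⟨hne₂, h0₂, hcv₂, hsc₂, hsub₂, hop₂, hKN₂, hNcl₂⟩, _⟩
    obtain ⟨k, hk⟩ := hne₂
    have hkN : k ∈ N := hKN₂ hk
    have hk0 : k ≠ 0 := hkN.1
    have hkV : k ∈ (V : Set (Esp m)) := by rw [← hCeqV]; exact hNC hkN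
    have hmkV : -k ∈ N ∪ {0} := by
      rw [hNV]
      exact Submodule.neg_mem V hkV
    have hmkN : -k ∈ N := by
      rcases hmkV with h | h
      · exact h
      · rw [mem_singleton_iff, neg_eq_zero] at h
        exact absurd h hk0
    exact h0₂ (zero_helper hsub₂ hcv₂ hop₂ hk (hNcl₂ hmkN))
  · -- case (b)
    have hKsubN : K ⊆ N := fun w hw => hKN w hw (fun h => hz (h ▸ hw))
    right
    constructor
    · refine ⟨(V, K), ⟨hKne, hz, hKconv, hKscale, hKsubV, hKopen, hKsubN, hNclK⟩, ?_⟩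
      rintro ⟨V₂, K₂⟩ ⟨hne₂, h0₂, hcv₂, hsc₂, hsub₂, hop₂, hKN₂, hNcl₂⟩
      obtain ⟨k₂, hk₂⟩ := hne₂
      have hclK₂K : closure K₂ = closure K := by
        apply Subset.antisymm
        · exact closure_minimal (fun x hx => hNclK (hKN₂ hx)) isClosed_closure
        · exact closure_minimal (fun x hx => hNcl₂ (hKsubN hx)) isClosed_closure
      have hclKV : closure K ⊆ (V : Set (Esp m)) :=
        closure_minimal hKsubV (Submodule.closed_of_finiteDimensional V)
      have hV₂ : V₂ = V := by
        apply le_antisymm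
        · refine le_trans (span_le_of_open hsub₂ hop₂ hk₂) ?_
          rw [Submodule.span_le]
          intro x hx
          have h1 : x ∈ closure K₂ := subset_closure hx
          rw [hclK₂K] at h1
          exact hclKV h1
        · show V ≤ V₂
          rw [hVd, Submodule.span_le]
          intro x hx
          have h1 : x ∈ closure K := hCclK hx
          rw [← hclK₂K] at h1
          exact closure_minimal hsub₂ (Submodule.closed_of_finiteDimensional V₂) h1
      subst hV₂
      have hK₂K : K₂ = K := by
        have hK₂'open : IsOpen ((Subtype.val : V → Esp m) ⁻¹' K₂) := hop₂
        have hK₂'conv : Convex ℝ ((Subtype.val : V → Esp m) ⁻¹' K₂) :=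
          hcv₂.linear_preimage V.subtype
        have hclsub : closure ((Subtype.val : V → Esp m) ⁻¹' K₂)
            = (Subtype.val : V → Esp m) ⁻¹' (closure K₂) := closure_preimage_val hsub₂
        have hKVeq : (Subtype.val : V → Esp m) ⁻¹' K = interior CV := by
          rw [hKd]
          exact preimage_image_eq _ Subtype.val_injective
        have hclsub2 : closure (interior CV)
            = (Subtype.val : V → Esp m) ⁻¹' (closure K) := by
          rw [← hKVeq]
          exact closure_preimage_val hKsubV
        have hsub1 : ((Subtype.val : V → Esp m) ⁻¹' K₂) ⊆ closure (interior CV) := by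
          intro x hx
          rw [hclsub2]
          show (x : Esp m) ∈ closure K
          rw [← hclK₂K]
          exact subset_closure hx
        have hsub2 : interior CV ⊆ closure ((Subtype.val : V → Esp m) ⁻¹' K₂) := by
          intro x hx
          rw [hclsub, hclK₂K]
          show (x : Esp m) ∈ closure K
          exact subset_closure ⟨x, hx, rfl⟩
        have e1 : ((Subtype.val : V → Esp m) ⁻¹' K₂) ⊆ interior CV :=
          stretch_subset hCVconv.interior isOpen_interior hK₂'open hsub1
        have e2 : interior CV ⊆ ((Subtype.val : V → Esp m) ⁻¹' K₂) :=
          stretch_subset hK₂'conv hK₂'open isOpen_interior hsub2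
        ext x
        constructor
        · intro hx
          have hxV : x ∈ V := hsub₂ hx
          have : (⟨x, hxV⟩ : V) ∈ interior CV := e1 hx
          exact ⟨⟨x, hxV⟩, this, rfl⟩
        · rintro ⟨x', hx', rfl⟩
          exact e2 hx'
      rw [hK₂K]
    · rintro ⟨W, hW⟩
      obtain ⟨k, hk⟩ := hKne
      have hkN : k ∈ N := hKsubN hk
      have hk0 : k ≠ 0 := hkN.1
      have hkW : k ∈ (W : Set (Esp m)) := by
        rw [← hW]; left; exact hkN
      have hmkW : -k ∈ N ∪ {0} := by
        rw [hW]; exact Submodule.neg_mem W hkW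
      have hmkN : -k ∈ N := by
        rcases hmkW with h | h
        · exact h
        · rw [mem_singleton_iff, neg_eq_zero] at h
          exact absurd h hk0
      exact hz (zero_helper hKsubV hKconv hKopen hk (hNclK hmkN))
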